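/- Assume a₂t² + b₂t + c₂ > 0 for all t ∈ ℝ. If d̂ = a₁b₂ − a₂b₁ ≠ 0, then ê² − 4·d̂·f̂ > 0, where ê = 2(a₁c₂ − a₂c₁) and f̂ = b₁c₂ − b₂c₁; consequently the quadratic d̂t² + êt + f̂ has two distinct real roots (−ê − √(ê²−4d̂f̂))/(2d̂) and (−ê + √(ê²−4d̂f̂))/(2d̂). -/

import Mathlib

/-- If the denominator quadratic `a₂t² + b₂t + c₂` is everywhere positive and
`d̂ = a₁b₂ − a₂b₁ ≠ 0`, then the discriminant `ê² − 4d̂f̂` of the numerator of the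
derivative of `R(t) = (a₁t²+b₁t+c₁)/(a₂t²+b₂t+c₂)` is positive, and the quadratic
`d̂t² + êt + f̂` has the two distinct real roots `(−ê ∓ √(ê²−4d̂f̂))/(2d̂)`. -/
theorem stmt1 (a₁ b₁ c₁ a₂ b₂ c₂ : ℝ)
    (hden : ∀ t : ℝ, 0 < a₂ * t ^ 2 + b₂ * t + c₂)
    (dhat ehat fhat : ℝ)
    (hd : dhat = a₁ * b₂ - a₂ * b₁)
    (he : ehat = 2 * (a₁ * c₂ - a₂ * c₁))
    (hf : fhat = b₁ * c₂ - b₂ * c₁)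
    (hdne : dhat ≠ 0) :
    0 < ehat ^ 2 - 4 * dhat * fhat ∧
    (let t₁ : ℝ := (-ehat - Real.sqrt (ehat ^ 2 - 4 * dhat * fhat)) / (2 * dhat)
     let t₂ : ℝ := (-ehat + Real.sqrt (ehat ^ 2 - 4 * dhat * fhat)) / (2 * dhat)
     dhat * t₁ ^ 2 + ehat * t₁ + fhat = 0 ∧
     dhat * t₂ ^ 2 + ehat * t₂ + fhat = 0 ∧
     t₁ ≠ t₂) := by
  have hc₂ : 0 < c₂ := by simpa using hden 0
  -- a₂ ≠ 0
  have ha₂ne : a₂ ≠ 0 := by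
    intro h0
    -- then b₂ t + c₂ > 0 for all t, so b₂ = 0, so dhat = 0
    have hb₂ : b₂ = 0 := by
      by_contra hb
      have h1 := hden ((-c₂ - 1) / b₂)
      rw [h0] at h1
      field_simp at h1
      rcases lt_or_gt_of_ne hb with hneg | hpos
      · rw [lt_div_iff₀ (by nlinarith)] at h1
        nlinarith [h1, mul_pos_of_neg_of_neg hneg hneg]
      · rw [lt_div_iff₀ (by nlinarith)] at h1
        nlinarith [h1, mul_pos hpos hpos]
    apply hdne
    rw [hd, h0, hb₂]; ring
  -- a₂ > 0
  have ha₂ : 0 < a₂ := by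
    rcases lt_or_gt_of_ne ha₂ne with hneg | hpos
    · exfalso
      set t := Real.sqrt ((c₂ + 1) / (-a₂)) with ht
      have ht2 : t ^ 2 = (c₂ + 1) / (-a₂) :=
        Real.sq_sqrt (div_nonneg (by linarith) (by linarith))
      have h1 := hden t
      have h2 := hden (-t)
      have h3 : -a₂ * t ^ 2 = c₂ + 1 := by
        rw [ht2]; field_simp
      nlinarith [h1, h2, h3]
    · exact hpos
  -- discriminant of denominator is negative: 4 a₂ c₂ - b₂² > 0
  have hΔ : 0 < 4 * a₂ * c₂ - b₂ ^ 2 := by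
    have h1 := hden (-b₂ / (2 * a₂))
    have h2 : a₂ * (-b₂ / (2 * a₂)) ^ 2 + b₂ * (-b₂ / (2 * a₂)) + c₂
        = (4 * a₂ * c₂ - b₂ ^ 2) / (4 * a₂) := by
      field_simp; ring
    rw [h2] at h1
    have := (div_pos_iff.mp h1)
    rcases this with ⟨h, _⟩ | ⟨_, h⟩
    · exact h
    · linarith
  have hdsq : 0 < dhat ^ 2 := by positivity
  have key : a₂ ^ 2 * (ehat ^ 2 - 4 * dhat * fhat)
      = (a₁ * b₂ ^ 2 - 2 * a₁ * a₂ * c₂ - a₂ * b₁ * b₂ + 2 * a₂ ^ 2 * c₁) ^ 2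
        + (4 * a₂ * c₂ - b₂ ^ 2) * dhat ^ 2 := by
    rw [hd, he, hf]; ring
  have hdisc : 0 < ehat ^ 2 - 4 * dhat * fhat := by
    nlinarith [sq_nonneg (a₁ * b₂ ^ 2 - 2 * a₁ * a₂ * c₂ - a₂ * b₁ * b₂ + 2 * a₂ ^ 2 * c₁),
      mul_pos hΔ hdsq, sq_nonneg a₂, mul_pos ha₂ ha₂]
  refine ⟨hdisc, ?_⟩
  set D := ehat ^ 2 - 4 * dhat * fhat with hD
  set s := Real.sqrt D with hsdef
  have hs2 : s ^ 2 = D := Real.sq_sqrt hdisc.le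
  have hspos : 0 < s := Real.sqrt_pos.mpr hdisc
  refine ⟨?_, ?_, ?_⟩
  · field_simp
    nlinarith [hs2]
  · field_simp
    nlinarith [hs2]
  · intro h
    rw [div_eq_div_iff (by simpa using hdne) (by simpa using hdne)] at h
    have hd2 : dhat ^ 2 > 0 := by positivity
    nlinarith [h, hspos, hd2]
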